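/- A G-graded commutative ring R is a Gelfand graded ring if and only if GSpec(R) is a normal topological space (any two disjoint closed sets can be separated by disjoint open sets). -/

import Mathlib

section GradedGelfand

variable {G : Type*} [AddGroup G] [DecidableEq G] {R : Type*} [CommRing R]
variable (𝒜 : G → AddSubgroup R) [GradedRing 𝒜]

/-- A homogeneous (graded) prime ideal: a proper graded ideal that is prime
with respect to homogeneous elements. -/
def IsGradedPrime (P : Ideal R) : Prop :=
  P.IsHomogeneous 𝒜 ∧ P ≠ ⊤ ∧
    ∀ a b : R, SetLike.IsHomogeneousElem 𝒜 a → SetLike.IsHomogeneousElem 𝒜 b →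
      a * b ∈ P → a ∈ P ∨ b ∈ P

/-- A graded maximal ideal: a proper graded ideal maximal among proper graded ideals. -/
def IsGradedMaximal (M : Ideal R) : Prop :=
  M.IsHomogeneous 𝒜 ∧ M ≠ ⊤ ∧
    ∀ J : Ideal R, J.IsHomogeneous 𝒜 → M ≤ J → J ≠ ⊤ → J = M

/-- The homogeneous prime spectrum of a graded ring. -/
def GSpec := { P : Ideal R // IsGradedPrime 𝒜 P }

/-- The Zariski topology on the homogeneous prime spectrum, generated by the basic
open sets `D_G(r)` for homogeneous `r`; the closed sets are exactly the `V_G(I)`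
for graded ideals `I`. -/
instance : TopologicalSpace (GSpec 𝒜) :=
  TopologicalSpace.generateFrom
    { U | ∃ r : R, SetLike.IsHomogeneousElem 𝒜 r ∧ U = { P : GSpec 𝒜 | r ∉ P.1 } }

/-- The set of graded maximal ideals inside the homogeneous prime spectrum. -/
def GMax : Set (GSpec 𝒜) := { P | IsGradedMaximal 𝒜 P.1 }

/-- A Gelfand graded ring: every homogeneous prime ideal is contained in a unique
graded maximal ideal. -/
def IsGelfandGraded : Prop :=
  ∀ P : Ideal R, IsGradedPrime 𝒜 P →
    ∃! M : Ideal R, IsGradedMaximal 𝒜 M ∧ P ≤ M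

/-- A pm⁺ graded ring: for every homogeneous prime `P`, the homogeneous primes
containing `P` form a chain. -/
def IsPMPlusGraded : Prop :=
  ∀ P Q Q' : Ideal R, IsGradedPrime 𝒜 P → IsGradedPrime 𝒜 Q → IsGradedPrime 𝒜 Q' →
    P ≤ Q → P ≤ Q' → Q ≤ Q' ∨ Q' ≤ Q

end GradedGelfand


section AuxLemmas
variable {G : Type*} [AddGroup G] [DecidableEq G] {R : Type*} [CommRing R]
variable (𝒜 : G → AddSubgroup R) [GradedRing 𝒜]

-- graded ideal is generated by its homogeneous elements
theorem gg_le_of_homs {I : Ideal R} (hI : I.IsHomogeneous 𝒜) {J : Ideal R}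
    (h : ∀ r ∈ I, SetLike.IsHomogeneousElem 𝒜 r → r ∈ J) : I ≤ J := by
  intro x hx
  classical
  rw [← DirectSum.sum_support_decompose 𝒜 x]
  refine Ideal.sum_mem _ fun i _ => h _ (hI i hx) ⟨i, SetLike.coe_mem _⟩

theorem gg_exists_gmax {I : Ideal R} (hI : I.IsHomogeneous 𝒜) (hne : I ≠ ⊤) :
    ∃ M : Ideal R, IsGradedMaximal 𝒜 M ∧ I ≤ M := by
  obtain ⟨m, him, hm⟩ := zorn_le_nonempty₀
    {J : Ideal R | J.IsHomogeneous 𝒜 ∧ J ≠ ⊤}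
    (fun c hcs hchain y hy => by
      refine ⟨sSup c, ⟨Ideal.IsHomogeneous.sSup (fun J hJ => (hcs hJ).1), ?_⟩,
        fun z hz => le_sSup hz⟩
      intro htop
      have h1 : (1 : R) ∈ sSup c := htop ▸ Submodule.mem_top
      obtain ⟨J, hJc, h1J⟩ := (Submodule.mem_sSup_of_directed ⟨y, hy⟩
        (hchain.directedOn)).1 h1
      exact (hcs hJc).2 ((Ideal.eq_top_iff_one J).2 h1J))
    I ⟨hI, hne⟩
  exact ⟨m, ⟨hm.prop.1, hm.prop.2,
    fun J hJ hmJ hJne => le_antisymm (hm.2 ⟨hJ, hJne⟩ hmJ) hmJ⟩, him⟩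

theorem gg_gmax_isPrime {M : Ideal R} (hM : IsGradedMaximal 𝒜 M) :
    IsGradedPrime 𝒜 M := by
  refine ⟨hM.1, hM.2.1, fun a b ha hb hab => ?_⟩
  by_contra h
  push_neg at h
  obtain ⟨haM, hbM⟩ := h
  have hJ : (M ⊔ Ideal.span {a}).IsHomogeneous 𝒜 :=
    hM.1.sup (Ideal.homogeneous_span 𝒜 _ (by rintro x rfl; exact ha))
  have hJtop : M ⊔ Ideal.span {a} = ⊤ := by
    by_contra hne
    have := hM.2.2 _ hJ le_sup_left hne
    exact haM (this ▸ ((le_sup_right : Ideal.span {a} ≤ M ⊔ Ideal.span {a})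
      (Ideal.subset_span rfl)))
  have h1 : (1 : R) ∈ M ⊔ Ideal.span {a} := hJtop ▸ Submodule.mem_top
  obtain ⟨p, hp, x, hx, hpx⟩ := Submodule.mem_sup.1 h1
  obtain ⟨r, rfl⟩ := Ideal.mem_span_singleton'.1 hx
  have : b = b * p + r * (a * b) := by linear_combination (-b) * hpx
  rw [this] at hbM
  exact hbM (Ideal.add_mem _ (Ideal.mul_mem_left _ _ hp)
    (Ideal.mul_mem_left _ _ hab))

theorem gg_exists_prime_disjoint (S : Submonoid R) (h0 : (0 : R) ∉ S) :
    ∃ P : Ideal R, IsGradedPrime 𝒜 P ∧ ∀ s ∈ S, s ∉ P := by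
  obtain ⟨m, _, hm⟩ := zorn_le_nonempty₀
    {J : Ideal R | J.IsHomogeneous 𝒜 ∧ ∀ s ∈ S, s ∉ J}
    (fun c hcs hchain y hy => by
      refine ⟨sSup c, ⟨Ideal.IsHomogeneous.sSup (fun J hJ => (hcs hJ).1), ?_⟩,
        fun z hz => le_sSup hz⟩
      intro s hsS hs
      obtain ⟨J, hJc, hsJ⟩ := (Submodule.mem_sSup_of_directed ⟨y, hy⟩
        (hchain.directedOn)).1 hs
      exact (hcs hJc).2 s hsS hsJ)
    ⊥ ⟨Ideal.IsHomogeneous.bot 𝒜, fun s hs h => h0 ((Submodule.mem_bot R).1 h ▸ hs)⟩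
  refine ⟨m, ⟨hm.prop.1, ?_, ?_⟩, hm.prop.2⟩
  · intro htop
    exact hm.prop.2 1 S.one_mem (htop ▸ Submodule.mem_top)
  · intro a b ha hb hab
    by_contra h
    push_neg at h
    obtain ⟨haM, hbM⟩ := h
    -- the enlarged ideals must meet S
    have key : ∀ x : R, SetLike.IsHomogeneousElem 𝒜 x → x ∉ m →
        ∃ s ∈ S, s ∈ m ⊔ Ideal.span {x} := by
      intro x hx hxm
      by_contra hc
      push_neg at hc
      have hmem : m ⊔ Ideal.span {x} ∈
          {J : Ideal R | J.IsHomogeneous 𝒜 ∧ ∀ s ∈ S, s ∉ J} :=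
        ⟨hm.prop.1.sup (Ideal.homogeneous_span 𝒜 _ (by rintro z rfl; exact hx)),
          fun s hs => hc s hs⟩
      exact hxm (hm.2 hmem le_sup_left ((le_sup_right :
        Ideal.span {x} ≤ m ⊔ Ideal.span {x}) (Ideal.subset_span rfl)))
    obtain ⟨s1, hs1S, hs1⟩ := key a ha haM
    obtain ⟨s2, hs2S, hs2⟩ := key b hb hbM
    obtain ⟨p1, hp1, x1, hx1, rfl⟩ := Submodule.mem_sup.1 hs1
    obtain ⟨p2, hp2, x2, hx2, rfl⟩ := Submodule.mem_sup.1 hs2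
    obtain ⟨r1, rfl⟩ := Ideal.mem_span_singleton'.1 hx1
    obtain ⟨r2, rfl⟩ := Ideal.mem_span_singleton'.1 hx2
    refine hm.prop.2 _ (S.mul_mem hs1S hs2S) ?_
    have : (p1 + r1 * a) * (p2 + r2 * b) =
        (p1 * p2 + (r2 * b) * p1 + (r1 * a) * p2) + (r1 * r2) * (a * b) := by ring
    rw [this]
    exact Ideal.add_mem _ (Ideal.add_mem _ (Ideal.add_mem _
      (Ideal.mul_mem_right _ _ hp1) (Ideal.mul_mem_left _ _ hp1))
      (Ideal.mul_mem_left _ _ hp2)) (Ideal.mul_mem_left _ _ hab)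

/-- Key separation lemma for Gelfand graded rings. -/
theorem gg_sep (hGel : IsGelfandGraded 𝒜) {M N : Ideal R}
    (hM : IsGradedMaximal 𝒜 M) (hN : IsGradedMaximal 𝒜 N) (hMN : M ≠ N) :
    ∃ a b : R, SetLike.IsHomogeneousElem 𝒜 a ∧ SetLike.IsHomogeneousElem 𝒜 b ∧
      a ∉ M ∧ b ∉ N ∧ ∀ P : Ideal R, IsGradedPrime 𝒜 P → a ∈ P ∨ b ∈ P := by
  by_contra hc
  push_neg at hc
  have hc' : ∀ a b : R, SetLike.IsHomogeneousElem 𝒜 a → SetLike.IsHomogeneousElem 𝒜 b →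
      a ∉ M → b ∉ N → ∃ P : Ideal R, IsGradedPrime 𝒜 P ∧ a ∉ P ∧ b ∉ P := by
    intro a b ha hb haM hbN
    obtain ⟨P, hP, hPab⟩ := hc a b ha hb haM hbN
    exact ⟨P, hP, by tauto⟩
  set T : Set R := {x | SetLike.IsHomogeneousElem 𝒜 x ∧ x ∉ M} ∪
    {x | SetLike.IsHomogeneousElem 𝒜 x ∧ x ∉ N} with hT
  set S := Submonoid.closure T with hS
  have hone : ∀ (L : Ideal R), L ≠ ⊤ → (1 : R) ∉ L := by
    intro L hL h1; exact hL ((Ideal.eq_top_iff_one L).2 h1)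
  have hform : ∀ s ∈ S, ∃ a b : R, (SetLike.IsHomogeneousElem 𝒜 a ∧ a ∉ M) ∧
      (SetLike.IsHomogeneousElem 𝒜 b ∧ b ∉ N) ∧ s = a * b := by
    intro s hs
    induction hs using Submonoid.closure_induction with
    | mem x hx =>
      rcases hx with hx | hx
      · exact ⟨x, 1, hx, ⟨SetLike.isHomogeneousElem_one 𝒜, hone N hN.2.1⟩, (mul_one x).symm⟩
      · exact ⟨1, x, ⟨SetLike.isHomogeneousElem_one 𝒜, hone M hM.2.1⟩, hx, (one_mul x).symm⟩
    | one => exact ⟨1, 1, ⟨SetLike.isHomogeneousElem_one 𝒜, hone M hM.2.1⟩,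
        ⟨SetLike.isHomogeneousElem_one 𝒜, hone N hN.2.1⟩, (one_mul 1).symm⟩
    | mul x y _ _ ihx ihy =>
      obtain ⟨a1, b1, ⟨ha1, ha1M⟩, ⟨hb1, hb1N⟩, rfl⟩ := ihx
      obtain ⟨a2, b2, ⟨ha2, ha2M⟩, ⟨hb2, hb2N⟩, rfl⟩ := ihy
      refine ⟨a1 * a2, b1 * b2, ⟨SetLike.IsHomogeneousElem.mul ha1 ha2, ?_⟩,
        ⟨SetLike.IsHomogeneousElem.mul hb1 hb2, ?_⟩, by ring⟩
      · intro h
        rcases (gg_gmax_isPrime 𝒜 hM).2.2 a1 a2 ha1 ha2 h with h' | h' <;> tauto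
      · intro h
        rcases (gg_gmax_isPrime 𝒜 hN).2.2 b1 b2 hb1 hb2 h with h' | h' <;> tauto
  have h0 : (0 : R) ∉ S := by
    intro h0S
    obtain ⟨a, b, ⟨ha, haM⟩, ⟨hb, hbN⟩, hab⟩ := hform 0 h0S
    obtain ⟨P, hP, haP, hbP⟩ := hc' a b ha hb haM hbN
    rcases hP.2.2 a b ha hb (hab ▸ P.zero_mem) with h | h <;> tauto
  obtain ⟨P, hP, hPS⟩ := gg_exists_prime_disjoint 𝒜 S h0
  have hPM : P ≤ M := gg_le_of_homs 𝒜 hP.1 (fun r hr hhom => by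
    by_contra hrM
    exact hPS r (Submonoid.subset_closure (Or.inl ⟨hhom, hrM⟩)) hr)
  have hPN : P ≤ N := gg_le_of_homs 𝒜 hP.1 (fun r hr hhom => by
    by_contra hrN
    exact hPS r (Submonoid.subset_closure (Or.inr ⟨hhom, hrN⟩)) hr)
  obtain ⟨M', -, huniq⟩ := hGel P hP
  exact hMN ((huniq M ⟨hM, hPM⟩).trans (huniq N ⟨hN, hPN⟩).symm)

theorem gg_isOpen_D {r : R} (hr : SetLike.IsHomogeneousElem 𝒜 r) :
    IsOpen {P : GSpec 𝒜 | r ∉ P.1} :=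
  TopologicalSpace.GenerateOpen.basic _ ⟨r, hr, rfl⟩

/-- generic point property: opens are downward closed for inclusion of primes -/
theorem gg_generic {U : Set (GSpec 𝒜)} (hU : IsOpen U) {P Q : GSpec 𝒜}
    (hPQ : P.1 ≤ Q.1) (hQ : Q ∈ U) : P ∈ U := by
  have hU' : TopologicalSpace.GenerateOpen
      { U | ∃ r : R, SetLike.IsHomogeneousElem 𝒜 r ∧ U = { P : GSpec 𝒜 | r ∉ P.1 } } U := hU
  clear hU
  revert hQ
  induction hU' with
  | basic V hV =>
    obtain ⟨r, -, rfl⟩ := hV; exact fun hQ hrP => hQ (hPQ hrP)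
  | univ => exact fun _ => trivial
  | inter V W _ _ ihV ihW => exact fun hQ => ⟨ihV hQ.1, ihW hQ.2⟩
  | sUnion 𝒮 _ ih =>
    rintro ⟨V, hV𝒮, hQV⟩
    exact ⟨V, hV𝒮, ih V hV𝒮 hQV⟩

theorem gg_closed_iff {C : Set (GSpec 𝒜)} : IsClosed C ↔
    ∃ E : Set R, (∀ e ∈ E, SetLike.IsHomogeneousElem 𝒜 e) ∧
      C = {P : GSpec 𝒜 | ∀ e ∈ E, e ∈ P.1} := by
  constructor
  · intro hC
    have hU : TopologicalSpace.GenerateOpen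
        { U | ∃ r : R, SetLike.IsHomogeneousElem 𝒜 r ∧ U = { P : GSpec 𝒜 | r ∉ P.1 } }
        Cᶜ := hC.isOpen_compl
    have main : ∀ U, TopologicalSpace.GenerateOpen
        { U | ∃ r : R, SetLike.IsHomogeneousElem 𝒜 r ∧ U = { P : GSpec 𝒜 | r ∉ P.1 } } U →
        ∃ E : Set R, (∀ e ∈ E, SetLike.IsHomogeneousElem 𝒜 e) ∧
          Uᶜ = {P : GSpec 𝒜 | ∀ e ∈ E, e ∈ P.1} := by
      intro U hU
      induction hU with
      | basic V hV =>
        obtain ⟨r, hr, rfl⟩ := hV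
        refine ⟨{r}, by simpa using hr, ?_⟩
        ext P; simp [Set.mem_compl_iff]
      | univ =>
        refine ⟨{1}, by simpa using SetLike.isHomogeneousElem_one 𝒜, ?_⟩
        ext P
        simp only [Set.compl_univ, Set.mem_empty_iff_false, Set.mem_setOf_eq,
          Set.mem_singleton_iff, false_iff]
        push_neg
        exact ⟨1, rfl, fun h => P.2.2.1 ((Ideal.eq_top_iff_one P.1).2 h)⟩
      | inter V W _ _ ihV ihW =>
        obtain ⟨E1, hE1, hV⟩ := ihV
        obtain ⟨E2, hE2, hW⟩ := ihW
        refine ⟨Set.image2 (· * ·) E1 E2, ?_, ?_⟩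
        · rintro e ⟨e1, he1, e2, he2, rfl⟩
          exact SetLike.IsHomogeneousElem.mul (hE1 e1 he1) (hE2 e2 he2)
        · rw [Set.compl_inter, hV, hW]
          ext P
          simp only [Set.mem_union, Set.mem_setOf_eq]
          constructor
          · rintro (h | h) e ⟨e1, he1, e2, he2, rfl⟩
            · exact Ideal.mul_mem_right _ _ (h e1 he1)
            · exact Ideal.mul_mem_left _ _ (h e2 he2)
          · intro h
            by_cases hE1P : ∀ e1 ∈ E1, e1 ∈ P.1
            · exact Or.inl hE1P
            · push_neg at hE1P
              obtain ⟨e1, he1, he1P⟩ := hE1P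
              refine Or.inr fun e2 he2 => ?_
              rcases P.2.2.2 e1 e2 (hE1 e1 he1) (hE2 e2 he2)
                (h _ ⟨e1, he1, e2, he2, rfl⟩) with h' | h'
              · exact absurd h' he1P
              · exact h'
      | sUnion 𝒮 h𝒮 ih =>
        choose E hEhom hEeq using ih
        refine ⟨⋃ (V : Set (GSpec 𝒜)) (hV : V ∈ 𝒮), E V hV, ?_, ?_⟩
        · simp only [Set.mem_iUnion]
          rintro e ⟨V, hV, he⟩
          exact hEhom V hV e he
        · rw [Set.compl_sUnion]
          ext P
          simp only [Set.mem_sInter, Set.mem_image, Set.mem_setOf_eq, Set.mem_iUnion]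
          constructor
          · rintro h e ⟨V, hV, he⟩
            have := h Vᶜ ⟨V, hV, rfl⟩
            rw [hEeq V hV] at this
            exact this e he
          · rintro h W ⟨V, hV, rfl⟩
            rw [hEeq V hV]
            exact fun e he => h e ⟨V, hV, he⟩
    obtain ⟨E, hE, hEeq⟩ := main _ hU
    exact ⟨E, hE, by rw [← hEeq, compl_compl]⟩
  · rintro ⟨E, hE, rfl⟩
    have : {P : GSpec 𝒜 | ∀ e ∈ E, e ∈ P.1}ᶜ = ⋃ e ∈ E, {P : GSpec 𝒜 | e ∉ P.1} := by
      ext P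
      simp only [Set.mem_compl_iff, Set.mem_setOf_eq, Set.mem_iUnion]
      push_neg
      tauto
    rw [← isOpen_compl_iff, this]
    exact isOpen_biUnion fun e he => gg_isOpen_D 𝒜 (hE e he)

theorem gg_prod_hom {ι : Type*} (s : Finset ι) (f : ι → R)
    (h : ∀ i ∈ s, SetLike.IsHomogeneousElem 𝒜 (f i)) :
    SetLike.IsHomogeneousElem 𝒜 (∏ i ∈ s, f i) :=
  Finset.prod_induction f _ (fun _ _ => SetLike.IsHomogeneousElem.mul)
    (SetLike.isHomogeneousElem_one 𝒜) h

theorem gg_prod_notMem {P : Ideal R} (hP : IsGradedPrime 𝒜 P) {ι : Type*}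
    (s : Finset ι) (f : ι → R) (hhom : ∀ i ∈ s, SetLike.IsHomogeneousElem 𝒜 (f i))
    (h : ∀ i ∈ s, f i ∉ P) : (∏ i ∈ s, f i) ∉ P := by
  classical
  induction s using Finset.induction with
  | empty =>
    simpa using fun h1 => hP.2.1 ((Ideal.eq_top_iff_one P).2 h1)
  | @insert i s hi ih =>
    rw [Finset.prod_insert hi]
    intro hmem
    rcases hP.2.2 _ _ (hhom i (Finset.mem_insert_self i s))
      (gg_prod_hom 𝒜 s f (fun j hj => hhom j (Finset.mem_insert_of_mem hj))) hmem with
      h' | h'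
    · exact h i (Finset.mem_insert_self i s) h'
    · exact ih (fun j hj => hhom j (Finset.mem_insert_of_mem hj))
        (fun j hj => h j (Finset.mem_insert_of_mem hj)) h'

theorem gg_prod_mem {I : Ideal R} {ι : Type*} {s : Finset ι} {f : ι → R} {i : ι}
    (hi : i ∈ s) (hfi : f i ∈ I) : (∏ j ∈ s, f j) ∈ I := by
  classical
  rw [← Finset.prod_erase_mul s f hi]
  exact Ideal.mul_mem_left _ _ hfi

/-- quasicompactness for basic covers of vanishing sets -/
theorem gg_compact {E : Set R} (hE : ∀ e ∈ E, SetLike.IsHomogeneousElem 𝒜 e)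
    {ι : Type*} (r : ι → R) (hr : ∀ i, SetLike.IsHomogeneousElem 𝒜 (r i))
    (hcov : {P : GSpec 𝒜 | ∀ e ∈ E, e ∈ P.1} ⊆ ⋃ i, {P : GSpec 𝒜 | r i ∉ P.1}) :
    ∃ t : Finset ι,
      {P : GSpec 𝒜 | ∀ e ∈ E, e ∈ P.1} ⊆ ⋃ i ∈ t, {P : GSpec 𝒜 | r i ∉ P.1} := by
  classical
  have hKtop : Ideal.span (E ∪ Set.range r) = ⊤ := by
    by_contra hne
    obtain ⟨M, hM, hKM⟩ := gg_exists_gmax 𝒜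
      (Ideal.homogeneous_span 𝒜 _ (by rintro x (hx | ⟨i, rfl⟩); exacts [hE x hx, hr i]))
      hne
    have hMC : (⟨M, gg_gmax_isPrime 𝒜 hM⟩ : GSpec 𝒜) ∈
        {P : GSpec 𝒜 | ∀ e ∈ E, e ∈ P.1} :=
      fun e he => hKM (Ideal.subset_span (Or.inl he))
    obtain ⟨i, hi⟩ := Set.mem_iUnion.1 (hcov hMC)
    exact hi (hKM (Ideal.subset_span (Or.inr ⟨i, rfl⟩)))
  have h1 : (1 : R) ∈ Ideal.span (E ∪ Set.range r) := hKtop ▸ Submodule.mem_top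
  obtain ⟨T, hTsub, hT1⟩ := Submodule.mem_span_finite_of_mem_span h1
  by_cases hι : Nonempty ι
  · have := hι
    set g : R → ι := fun x => if h : ∃ i, r i = x then h.choose else Classical.arbitrary ι
      with hg
    refine ⟨T.image g, ?_⟩
    intro P hP
    rw [Set.mem_iUnion₂]
    by_contra hcon
    push_neg at hcon
    have hTP : (T : Set R) ⊆ P.1 := by
      intro x hxT
      rcases hTsub hxT with hx | ⟨i, rfl⟩
      · exact hP x hx
      · have hgx : r (g (r i)) = r i := by
          rw [hg]
          have hex : ∃ j, r j = r i := ⟨i, rfl⟩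
          simp only [dif_pos hex]
          exact hex.choose_spec
        have := hcon (g (r i)) (Finset.mem_image_of_mem g hxT)
        simp only [Set.mem_setOf_eq, not_not] at this
        rwa [hgx] at this
    have : (1 : R) ∈ P.1 := Ideal.span_le.2 hTP hT1
    exact P.2.2.1 ((Ideal.eq_top_iff_one P.1).2 this)
  · refine ⟨∅, ?_⟩
    intro P hP
    exfalso
    have hTP : (T : Set R) ⊆ P.1 := by
      intro x hxT
      rcases hTsub hxT with hx | ⟨i, rfl⟩
      · exact hP x hx
      · exact absurd ⟨i⟩ hι
    exact P.2.2.1 ((Ideal.eq_top_iff_one P.1).2 (Ideal.span_le.2 hTP hT1))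
end AuxLemmas

section Statements

variable {G : Type*} [AddGroup G] [DecidableEq G] {R : Type*} [CommRing R]
variable (𝒜 : G → AddSubgroup R) [GradedRing 𝒜]

theorem stmt_8 : IsGelfandGraded 𝒜 ↔ NormalSpace (GSpec 𝒜) := by
  constructor
  · -- Gelfand → normal
    intro hGel
    refine ⟨fun C D hC hD hdisj => ?_⟩
    obtain ⟨E, hE, rfl⟩ := (gg_closed_iff 𝒜).1 hC
    obtain ⟨F, hF, rfl⟩ := (gg_closed_iff 𝒜).1 hD
    have hmax : ∀ P : GSpec 𝒜, ∃ M, IsGradedMaximal 𝒜 M ∧ P.1 ≤ M :=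
      fun P => gg_exists_gmax 𝒜 P.2.1 P.2.2.1
    choose μ hμmax hμle using hmax
    -- key claim: for each point of C, a basic nbhd disjoint from an open ⊇ D
    have step : ∀ P : GSpec 𝒜, (∀ e ∈ E, e ∈ P.1) →
        ∃ a : R, SetLike.IsHomogeneousElem 𝒜 a ∧ a ∉ μ P ∧
          ∃ W : Set (GSpec 𝒜), IsOpen W ∧
            {Q : GSpec 𝒜 | ∀ f ∈ F, f ∈ Q.1} ⊆ W ∧
            ∀ x : GSpec 𝒜, a ∉ x.1 → x ∉ W := by
      intro P hP
      have hsep : ∀ Q : {Q : GSpec 𝒜 // ∀ f ∈ F, f ∈ Q.1.1},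
          ∃ a b : R, SetLike.IsHomogeneousElem 𝒜 a ∧ SetLike.IsHomogeneousElem 𝒜 b ∧
            a ∉ μ P ∧ b ∉ μ Q.1 ∧
            ∀ P' : Ideal R, IsGradedPrime 𝒜 P' → a ∈ P' ∨ b ∈ P' := by
        intro Q
        refine gg_sep 𝒜 hGel (hμmax P) (hμmax Q.1) ?_
        intro heq
        have hμP : (⟨μ P, gg_gmax_isPrime 𝒜 (hμmax P)⟩ : GSpec 𝒜) ∈
            {P : GSpec 𝒜 | ∀ e ∈ E, e ∈ P.1} := fun e he => hμle P (hP e he)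
        have hμQ : (⟨μ P, gg_gmax_isPrime 𝒜 (hμmax P)⟩ : GSpec 𝒜) ∈
            {Q : GSpec 𝒜 | ∀ f ∈ F, f ∈ Q.1} :=
          fun f hf => by
            have h' : f ∈ μ Q.1 := hμle Q.1 (Q.2 f hf)
            rw [← heq] at h'
            exact h'
        exact Set.disjoint_left.1 hdisj hμP hμQ
      choose a b ha hb haP hbQ hcov using hsep
      have hDcov : {Q : GSpec 𝒜 | ∀ f ∈ F, f ∈ Q.1} ⊆
          ⋃ Q : {Q : GSpec 𝒜 // ∀ f ∈ F, f ∈ Q.1.1}, {x : GSpec 𝒜 | b Q ∉ x.1} := by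
        intro x hx
        exact Set.mem_iUnion.2 ⟨⟨x, hx⟩, fun hmem => hbQ ⟨x, hx⟩ (hμle x hmem)⟩
      obtain ⟨t, ht⟩ := gg_compact 𝒜 hF _ hb hDcov
      refine ⟨∏ Q ∈ t, a Q, gg_prod_hom 𝒜 t a (fun Q _ => ha Q),
        gg_prod_notMem 𝒜 (gg_gmax_isPrime 𝒜 (hμmax P)) t a (fun Q _ => ha Q)
          (fun Q _ => haP Q),
        ⋃ Q ∈ t, {x : GSpec 𝒜 | b Q ∉ x.1},
        isOpen_biUnion (fun Q _ => gg_isOpen_D 𝒜 (hb Q)), ht, ?_⟩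
      intro x hax hxW
      obtain ⟨Q, hQt, hQx⟩ := Set.mem_iUnion₂.1 hxW
      rcases hcov Q x.1 x.2 with h' | h'
      · exact hax (gg_prod_mem hQt h')
      · exact hQx h'
    have step' : ∀ P : {P : GSpec 𝒜 // ∀ e ∈ E, e ∈ P.1.1},
        ∃ a : R, SetLike.IsHomogeneousElem 𝒜 a ∧ a ∉ μ P.1 ∧
          ∃ W : Set (GSpec 𝒜), IsOpen W ∧
            {Q : GSpec 𝒜 | ∀ f ∈ F, f ∈ Q.1} ⊆ W ∧
            ∀ x : GSpec 𝒜, a ∉ x.1 → x ∉ W :=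
      fun P => step P.1 P.2
    choose a ha haP W hWopen hDW hWdisj using step'
    have hCcov : {P : GSpec 𝒜 | ∀ e ∈ E, e ∈ P.1} ⊆
        ⋃ P : {P : GSpec 𝒜 // ∀ e ∈ E, e ∈ P.1.1}, {x : GSpec 𝒜 | a P ∉ x.1} := by
      intro x hx
      exact Set.mem_iUnion.2 ⟨⟨x, hx⟩, fun hmem => haP ⟨x, hx⟩ (hμle x hmem)⟩
    obtain ⟨s, hs⟩ := gg_compact 𝒜 hE _ ha hCcov
    refine ⟨⋃ P ∈ s, {x : GSpec 𝒜 | a P ∉ x.1}, ⋂ P ∈ s, W P,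
      isOpen_biUnion (fun P _ => gg_isOpen_D 𝒜 (ha P)),
      isOpen_biInter_finset (fun P _ => hWopen P), hs,
      fun x hx => Set.mem_iInter₂.2 (fun P _ => hDW P hx), ?_⟩
    rw [Set.disjoint_left]
    intro x hxU hxV
    obtain ⟨P, hPs, hPx⟩ := Set.mem_iUnion₂.1 hxU
    exact hWdisj P x hPx (Set.mem_iInter₂.1 hxV P hPs)
  · -- normal → Gelfand
    intro hNorm P hP
    obtain ⟨M, hM, hPM⟩ := gg_exists_gmax 𝒜 hP.1 hP.2.1
    refine ⟨M, ⟨hM, hPM⟩, ?_⟩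
    rintro N ⟨hN, hPN⟩
    by_contra hne
    have hsing : ∀ (L : Ideal R) (hL : IsGradedMaximal 𝒜 L),
        IsClosed ({⟨L, gg_gmax_isPrime 𝒜 hL⟩} : Set (GSpec 𝒜)) := by
      intro L hL
      rw [gg_closed_iff]
      refine ⟨{r | r ∈ L ∧ SetLike.IsHomogeneousElem 𝒜 r}, fun e he => he.2, ?_⟩
      ext Q
      simp only [Set.mem_singleton_iff, Set.mem_setOf_eq]
      constructor
      · rintro rfl
        exact fun e he => he.1
      · intro h
        have hLQ : L ≤ Q.1 := gg_le_of_homs 𝒜 hL.1 (fun r hr hhom => h r ⟨hr, hhom⟩)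
        have : Q.1 = L := hL.2.2 Q.1 Q.2.1 hLQ Q.2.2.1
        exact Subtype.ext this
    have hMNpt : (⟨N, gg_gmax_isPrime 𝒜 hN⟩ : GSpec 𝒜) ≠
        (⟨M, gg_gmax_isPrime 𝒜 hM⟩ : GSpec 𝒜) := by
      intro h
      exact hne (congrArg Subtype.val h)
    obtain ⟨U, V, hU, hV, hMU, hNV, hUV⟩ := hNorm.normal _ _ (hsing N hN) (hsing M hM)
      (Set.disjoint_singleton.2 hMNpt)
    have hPU : (⟨P, hP⟩ : GSpec 𝒜) ∈ U :=
      gg_generic 𝒜 hU hPN (hMU rfl)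
    have hPV : (⟨P, hP⟩ : GSpec 𝒜) ∈ V :=
      gg_generic 𝒜 hV hPM (hNV rfl)
    exact Set.disjoint_left.1 hUV hPU hPV
end Statements
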